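/- Let G = (V_s, V_p, E) be a bipartite graph that is not a matching (i.e., some vertex of G has degree at least 2). Then DT(G) ≤ hub(G) − 1, where DT(G) is the distinctness of G and hub(G) is the HUB number of G. -/

import Mathlib

namespace Readability

/-- `x` overlaps `y` by `i`: `1 ≤ i ≤ min |x| |y|` and the length-`i` suffix of `x`
equals the length-`i` prefix of `y`. -/
def OverlapsBy {α : Type*} (x y : List α) (i : ℕ) : Prop :=
  1 ≤ i ∧ i ≤ min x.length y.length ∧ x.drop (x.length - i) = y.take i

/-- `ov x y`: the minimum `i` such that `x` overlaps `y` by `i`, or `0` if none exists. -/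
noncomputable def ov {α : Type*} (x y : List α) : ℕ := sInf {i | OverlapsBy x y i}

/-- An overlap labeling of length `r` of the bipartite graph with parts `Vs`, `Vp` and
edge relation `E ⊆ Vs × Vp`. -/
def IsOverlapLabeling {α Vs Vp : Type*} (E : Vs → Vp → Prop) (r : ℕ)
    (ls : Vs → List α) (lp : Vp → List α) : Prop :=
  (∀ u, (ls u).length = r) ∧ (∀ v, (lp v).length = r) ∧
    ∀ u v, E u v ↔ ∃ i, OverlapsBy (ls u) (lp v) i

/-- Bipartite readability: the least `r` admitting an overlap labeling of length `r`
(over the alphabet `ℕ`). -/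
noncomputable def bReadability {Vs Vp : Type*} (E : Vs → Vp → Prop) : ℕ :=
  sInf {r | ∃ (ls : Vs → List ℕ) (lp : Vp → List ℕ), IsOverlapLabeling E r ls lp}

/-- An injective overlap labeling of length `r` of the digraph with arc relation `A`. -/
def IsInjOverlapLabeling {V : Type*} (A : V → V → Prop) (r : ℕ) (ℓ : V → List ℕ) : Prop :=
  (∀ v, (ℓ v).length = r) ∧ Function.Injective ℓ ∧
    ∀ u v, A u v ↔ 0 < ov (ℓ u) (ℓ v) ∧ ov (ℓ u) (ℓ v) < r

/-- Digraph readability: the least `r` admitting an injective overlap labeling of length `r`. -/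
noncomputable def dReadability {V : Type*} (A : V → V → Prop) : ℕ :=
  sInf {r | ∃ ℓ : V → List ℕ, IsInjOverlapLabeling A r ℓ}

/-- A decomposition of size `k`: a weight function on edges with values in `{1,…,k}`. -/
def IsDecomposition {Vs Vp : Type*} (E : Vs → Vp → Prop) (k : ℕ) (w : Vs → Vp → ℕ) : Prop :=
  ∀ u v, E u v → 1 ≤ w u v ∧ w u v ≤ k

/-- An induced `P₄` with consecutive edges `(s1,p1), (s2,p1), (s2,p2)`. -/
def InducedP4 {Vs Vp : Type*} (E : Vs → Vp → Prop) (s1 s2 : Vs) (p1 p2 : Vp) : Prop :=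
  s1 ≠ s2 ∧ p1 ≠ p2 ∧ E s1 p1 ∧ E s2 p1 ∧ E s2 p2 ∧ ¬ E s1 p2

/-- The `P₄`-rule: on each induced `P₄`, if the middle edge has maximum weight then its weight
is at least the sum of the weights of the two outer edges. -/
def SatisfiesP4Rule {Vs Vp : Type*} (E : Vs → Vp → Prop) (w : Vs → Vp → ℕ) : Prop :=
  ∀ s1 s2 p1 p2, InducedP4 E s1 s2 p1 p2 →
    w s2 p1 = max (w s1 p1) (max (w s2 p1) (w s2 p2)) →
    w s1 p1 + w s2 p2 ≤ w s2 p1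

/-- The strict `P₄`-rule: as the `P₄`-rule, with strict inequality. -/
def SatisfiesStrictP4Rule {Vs Vp : Type*} (E : Vs → Vp → Prop) (w : Vs → Vp → ℕ) : Prop :=
  ∀ s1 s2 p1 p2, InducedP4 E s1 s2 p1 p2 →
    w s2 p1 = max (w s1 p1) (max (w s2 p1) (w s2 p2)) →
    w s1 p1 + w s2 p2 < w s2 p1

/-- `C₄`-freeness of a bipartite graph. -/
def C4Free {Vs Vp : Type*} (E : Vs → Vp → Prop) : Prop :=
  ∀ (s1 s2 : Vs) (p1 p2 : Vp), s1 ≠ s2 → p1 ≠ p2 →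
    ¬ (E s1 p1 ∧ E s1 p2 ∧ E s2 p1 ∧ E s2 p2)

/-- The subgraph `G_i` of a decomposition: edges of weight exactly `i`. -/
def SubAt {Vs Vp : Type*} (E : Vs → Vp → Prop) (w : Vs → Vp → ℕ) (i : ℕ) :
    Vs → Vp → Prop :=
  fun u v => E u v ∧ w u v = i

/-- A bipartite edge relation is a disjoint union of bicliques iff it has no induced `P₄`,
i.e. whenever `(s1,p1), (s2,p1), (s2,p2)` are edges, so is `(s1,p2)`. -/
def BicliqueUnion {Vs Vp : Type*} (H : Vs → Vp → Prop) : Prop :=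
  ∀ s1 s2 p1 p2, H s1 p1 → H s2 p1 → H s2 p2 → H s1 p2

/-- The HUB-rule for a decomposition `w`:
(i) every level graph `G_i` is a disjoint union of bicliques, and
(ii) non-isolated twins in `G_i` (for `i ≥ 2`) are twins in every `G_j` with `1 ≤ j ≤ i-1`
(stated for both parts of the bipartition). -/
def SatisfiesHUBRule {Vs Vp : Type*} (E : Vs → Vp → Prop) (w : Vs → Vp → ℕ) : Prop :=
  (∀ i, 1 ≤ i → BicliqueUnion (SubAt E w i)) ∧
  (∀ i, 2 ≤ i → ∀ u v : Vs, u ≠ v → (∃ p, SubAt E w i u p) →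
      (∀ p, SubAt E w i u p ↔ SubAt E w i v p) →
      ∀ j, 1 ≤ j → j ≤ i - 1 → ∀ p, SubAt E w j u p ↔ SubAt E w j v p) ∧
  (∀ i, 2 ≤ i → ∀ u v : Vp, u ≠ v → (∃ s, SubAt E w i s u) →
      (∀ s, SubAt E w i s u ↔ SubAt E w i s v) →
      ∀ j, 1 ≤ j → j ≤ i - 1 → ∀ s, SubAt E w j s u ↔ SubAt E w j s v)

/-- The HUB number: minimum size of a decomposition satisfying the HUB-rule. -/
noncomputable def hubNumber {Vs Vp : Type*} (E : Vs → Vp → Prop) : ℕ :=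
  sInf {k | ∃ w, IsDecomposition E k w ∧ SatisfiesHUBRule E w}

/-- The underlying undirected simple graph on `Vs ⊕ Vp` of a bipartite graph. -/
def underlyingGraph {Vs Vp : Type*} (E : Vs → Vp → Prop) : SimpleGraph (Vs ⊕ Vp) where
  Adj x y := (∃ u v, x = Sum.inl u ∧ y = Sum.inr v ∧ E u v) ∨
    (∃ u v, x = Sum.inr v ∧ y = Sum.inl u ∧ E u v)
  symm := ⟨by
    rintro x y (⟨u, v, rfl, rfl, h⟩ | ⟨u, v, rfl, rfl, h⟩)
    · exact Or.inr ⟨u, v, rfl, rfl, h⟩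
    · exact Or.inl ⟨u, v, rfl, rfl, h⟩⟩
  loopless := ⟨by
    rintro x (⟨u, v, h1, h2, -⟩ | ⟨u, v, h1, h2, -⟩) <;> subst h1 <;> simp_all⟩

/-- The radius of a graph: the least `r` such that some vertex has eccentricity at most `r`
(for a finite connected graph this is `min_u max_v dist(u,v)`). -/
noncomputable def graphRadius {V : Type*} (G : SimpleGraph V) : ℕ :=
  sInf {r | ∃ u, ∀ v, G.dist u v ≤ r}

/-- Distinctness of two vertices `u, v` of the same part (here the `Vs`-part, with
neighborhoods taken in `Vp`): `max(|N(u)∖N(v)|, |N(v)∖N(u)|)`. -/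
noncomputable def DTpair {Vs Vp : Type*} (E : Vs → Vp → Prop) (u v : Vs) : ℕ :=
  max {p : Vp | E u p ∧ ¬ E v p}.ncard {p : Vp | E v p ∧ ¬ E u p}.ncard

/-- Distinctness of a bipartite graph: the minimum of `DT(u,v)` over pairs of distinct
vertices in the same part. -/
noncomputable def distinctness {Vs Vp : Type*} (E : Vs → Vp → Prop) : ℕ :=
  sInf ({d | ∃ u v : Vs, u ≠ v ∧ d = DTpair E u v} ∪
        {d | ∃ u v : Vp, u ≠ v ∧ d = DTpair (fun p s => E s p) u v})

/-- A bipartite graph fails to be a matching iff some vertex has degree at least 2. -/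
def NotMatching {Vs Vp : Type*} (E : Vs → Vp → Prop) : Prop :=
  (∃ u : Vs, ∃ p1 p2 : Vp, p1 ≠ p2 ∧ E u p1 ∧ E u p2) ∨
  (∃ p : Vp, ∃ u1 u2 : Vs, u1 ≠ u2 ∧ E u1 p ∧ E u2 p)

lemma biclique_flip {Vs Vp : Type*} {H : Vs → Vp → Prop} (hb : BicliqueUnion H) :
    BicliqueUnion (fun p s => H s p) :=
  fun a1 a2 b1 b2 h1 h2 h3 => hb b2 b1 a2 a1 h3 h2 h1

lemma twins_of_common {Vs Vp : Type*} {H : Vs → Vp → Prop} (hb : BicliqueUnion H)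
    {s s' : Vs} {p : Vp} (h1 : H s p) (h2 : H s' p) : ∀ q, H s q ↔ H s' q :=
  fun q => ⟨fun h => hb s' s p q h2 h1 h, fun h => hb s s' p q h1 h2 h⟩

lemma mem_L_of_two {Vs Vp : Type*} {E : Vs → Vp → Prop} {w : Vs → Vp → ℕ} {j : ℕ}
    (hbj : BicliqueUnion (SubAt E w j)) {z : Vs} {p p' : Vp} (hne : p ≠ p')
    (h1 : SubAt E w j z p) (h2 : SubAt E w j z p') :
    ∃ u v : Vp, u ≠ v ∧ (∃ s, SubAt E w j s u) ∧
      (∀ s, SubAt E w j s u ↔ SubAt E w j s v) :=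
  ⟨p, p', hne, ⟨z, h1⟩, twins_of_common (biclique_flip hbj) h1 h2⟩

lemma ncard_bound {Vs Vp : Type*} [Fintype Vs] (E : Vs → Vp → Prop) (w : Vs → Vp → ℕ)
    (x y : Vp) (T : Finset ℕ)
    (hmem : ∀ s, E s x → ¬ E s y → w s x ∈ T)
    (hinj : ∀ s s', E s x → ¬ E s y → E s' x → ¬ E s' y → w s x = w s' x → s = s') :
    {s : Vs | E s x ∧ ¬ E s y}.ncard ≤ T.card := by
  have h := Set.ncard_le_ncard_of_injOn (s := {s : Vs | E s x ∧ ¬ E s y}) (t := (T : Set ℕ))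
    (fun s => w s x)
    (fun s hs => by exact Finset.mem_coe.mpr (hmem s hs.1 hs.2))
    (fun s hs s' hs' h => hinj s s' hs.1 hs.2 hs'.1 hs'.2 h)
    (T.finite_toSet)
  simpa using h

lemma case1_bound {Vs Vp : Type*} [Fintype Vs] (E : Vs → Vp → Prop) (w : Vs → Vp → ℕ)
    (k i : ℕ) (hd : IsDecomposition E k w) (x y : Vp)
    (hlow : ∀ j, 1 ≤ j → j ≤ i → ∀ s, SubAt E w j s x ↔ SubAt E w j s y)
    (hnt : ∀ j, i < j → ∀ s s' : Vs, s ≠ s' →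
      SubAt E w j s x → SubAt E w j s' x → False) :
    {s : Vs | E s x ∧ ¬ E s y}.ncard ≤ k - i := by
  have hmem : ∀ s, E s x → ¬ E s y → w s x ∈ Finset.Icc (i + 1) k := by
    intro s hsx hsy
    obtain ⟨h1, h2⟩ := hd s x hsx
    rw [Finset.mem_Icc]
    refine ⟨?_, h2⟩
    by_contra hc
    exact hsy ((hlow (w s x) h1 (by omega) s).mp ⟨hsx, rfl⟩).1
  have hcard : {s : Vs | E s x ∧ ¬ E s y}.ncard ≤ (Finset.Icc (i + 1) k).card := by
    refine ncard_bound E w x y _ hmem ?_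
    intro s s' hsx hsy hsx' hsy' hww
    by_contra hne
    have hmem1 := hmem s hsx hsy
    rw [Finset.mem_Icc] at hmem1
    exact hnt (w s x) (by omega) s s' hne ⟨hsx, rfl⟩ ⟨hsx', hww.symm⟩
  rw [Nat.card_Icc] at hcard
  omega

lemma case2_bound {Vs Vp : Type*} [Fintype Vs] (E : Vs → Vp → Prop) (w : Vs → Vp → ℕ)
    (k : ℕ) (hd : IsDecomposition E k w) (x y : Vp) (u : Vs)
    (hux : E u x) (huy : E u y)
    (hnt : ∀ j, ∀ s s' : Vs, s ≠ s' → SubAt E w j s x → SubAt E w j s' x → False) :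
    {s : Vs | E s x ∧ ¬ E s y}.ncard ≤ k - 1 := by
  have huI : w u x ∈ Finset.Icc 1 k := Finset.mem_Icc.mpr (hd u x hux)
  have hmem : ∀ s, E s x → ¬ E s y → w s x ∈ (Finset.Icc 1 k).erase (w u x) := by
    intro s hsx hsy
    refine Finset.mem_erase.mpr ⟨?_, Finset.mem_Icc.mpr (hd s x hsx)⟩
    intro heq
    have hne : s ≠ u := fun h => hsy (h ▸ huy)
    exact hnt (w s x) s u hne ⟨hsx, rfl⟩ ⟨hux, heq.symm⟩
  have hcard : {s : Vs | E s x ∧ ¬ E s y}.ncard ≤ ((Finset.Icc 1 k).erase (w u x)).card := by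
    refine ncard_bound E w x y _ hmem ?_
    intro s s' hsx hsy hsx' hsy' hww
    by_contra hne
    exact hnt (w s x) s s' hne ⟨hsx, rfl⟩ ⟨hsx', hww.symm⟩
  rw [Finset.card_erase_of_mem huI, Nat.card_Icc] at hcard
  omega

lemma key {Vs Vp : Type*} [Fintype Vs] [Fintype Vp] {E : Vs → Vp → Prop}
    (hm : NotMatching E) {k : ℕ} {w : Vs → Vp → ℕ}
    (hd : IsDecomposition E k w) (hh : SatisfiesHUBRule E w) :
    ∃ d ∈ ({d | ∃ u v : Vs, u ≠ v ∧ d = DTpair E u v} ∪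
        {d | ∃ u v : Vp, u ≠ v ∧ d = DTpair (fun p s => E s p) u v}), d ≤ k - 1 := by
  classical
  obtain ⟨hb, htS, htP⟩ := hh
  set L : Set ℕ := {j | (∃ u v : Vs, u ≠ v ∧ (∃ p, SubAt E w j u p) ∧
      (∀ p, SubAt E w j u p ↔ SubAt E w j v p)) ∨
    (∃ u v : Vp, u ≠ v ∧ (∃ s, SubAt E w j s u) ∧
      (∀ s, SubAt E w j s u ↔ SubAt E w j s v))} with hLdef
  have hLbdd : ∀ j ∈ L, j ≤ k := by
    rintro j (⟨u, v, -, ⟨p, hp⟩, -⟩ | ⟨u, v, -, ⟨s, hs⟩, -⟩)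
    · exact hp.2 ▸ (hd u p hp.1).2
    · exact hs.2 ▸ (hd s u hs.1).2
  -- decomposition relations flipped
  have hd' : IsDecomposition (fun p s => E s p) k (fun p s => w s p) :=
    fun p s h => hd s p h
  by_cases hL : L.Nonempty
  · -- there is a non-isolated twin pair at some level; take the maximum such level
    set i := sSup L with hidef
    have hbd : BddAbove L := ⟨k, fun j hj => hLbdd j hj⟩
    have hiL : i ∈ L := Nat.sSup_mem hL hbd
    have hmaxL : ∀ j ∈ L, j ≤ i := fun j hj => le_csSup hbd hj
    have hi1 : 1 ≤ i := by
      rcases hiL with ⟨u, v, -, ⟨p, hp⟩, -⟩ | ⟨u, v, -, ⟨s, hs⟩, -⟩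
      · exact hp.2 ▸ (hd u p hp.1).1
      · exact hs.2 ▸ (hd s u hs.1).1
    -- no vertex has two distinct neighbors at a level above i
    have hA : ∀ (j : ℕ) (z : Vs) (p p' : Vp), i < j → p ≠ p' →
        SubAt E w j z p → SubAt E w j z p' → False := by
      intro j z p p' hij hne h1 h2
      have hj1 : 1 ≤ j := h1.2 ▸ (hd z p h1.1).1
      have : j ∈ L := Or.inr (mem_L_of_two (hb j hj1) hne h1 h2)
      exact absurd (hmaxL j this) (by omega)
    have hB : ∀ (j : ℕ) (z : Vp) (s s' : Vs), i < j → s ≠ s' →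
        SubAt E w j s z → SubAt E w j s' z → False := by
      intro j z s s' hij hne h1 h2
      have hj1 : 1 ≤ j := h1.2 ▸ (hd s z h1.1).1
      have : j ∈ L := Or.inl (mem_L_of_two
        (E := fun p s => E s p) (w := fun p s => w s p)
        (biclique_flip (hb j hj1)) hne h1 h2)
      exact absurd (hmaxL j this) (by omega)
    rcases hiL with ⟨u, v, huv, ⟨p0, hp0⟩, htw⟩ | ⟨u, v, huv, ⟨s0, hs0⟩, htw⟩
    · -- twin pair in Vs
      have hlow : ∀ j, 1 ≤ j → j ≤ i → ∀ p, SubAt E w j u p ↔ SubAt E w j v p := by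
        intro j hj1 hji p
        rcases eq_or_lt_of_le hji with rfl | hlt
        · exact htw p
        · exact htS i (by omega) u v huv ⟨p0, hp0⟩ htw j hj1 (by omega) p
      have b1 : {p : Vp | E u p ∧ ¬ E v p}.ncard ≤ k - i :=
        case1_bound (fun p s => E s p) (fun p s => w s p) k i hd' u v hlow
          (fun j hj p p' hne h1 h2 => hA j u p p' hj hne h1 h2)
      have b2 : {p : Vp | E v p ∧ ¬ E u p}.ncard ≤ k - i :=
        case1_bound (fun p s => E s p) (fun p s => w s p) k i hd' v u
          (fun j hj1 hji p => (hlow j hj1 hji p).symm)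
          (fun j hj p p' hne h1 h2 => hA j v p p' hj hne h1 h2)
      refine ⟨DTpair E u v, Or.inl ⟨u, v, huv, rfl⟩, ?_⟩
      have : DTpair E u v ≤ k - i := max_le b1 b2
      omega
    · -- twin pair in Vp
      have hlow : ∀ j, 1 ≤ j → j ≤ i → ∀ s, SubAt E w j s u ↔ SubAt E w j s v := by
        intro j hj1 hji s
        rcases eq_or_lt_of_le hji with rfl | hlt
        · exact htw s
        · exact htP i (by omega) u v huv ⟨s0, hs0⟩ htw j hj1 (by omega) s
      have b1 : {s : Vs | E s u ∧ ¬ E s v}.ncard ≤ k - i :=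
        case1_bound E w k i hd u v hlow
          (fun j hj s s' hne h1 h2 => hB j u s s' hj hne h1 h2)
      have b2 : {s : Vs | E s v ∧ ¬ E s u}.ncard ≤ k - i :=
        case1_bound E w k i hd v u
          (fun j hj1 hji s => (hlow j hj1 hji s).symm)
          (fun j hj s s' hne h1 h2 => hB j v s s' hj hne h1 h2)
      refine ⟨DTpair (fun p s => E s p) u v, Or.inr ⟨u, v, huv, rfl⟩, ?_⟩
      have : DTpair (fun p s => E s p) u v ≤ k - i := max_le b1 b2
      omega
  · -- no non-isolated twin pair at any level
    have hA : ∀ (j : ℕ) (z : Vs) (p p' : Vp), p ≠ p' →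
        SubAt E w j z p → SubAt E w j z p' → False := by
      intro j z p p' hne h1 h2
      have hj1 : 1 ≤ j := h1.2 ▸ (hd z p h1.1).1
      exact hL ⟨j, Or.inr (mem_L_of_two (hb j hj1) hne h1 h2)⟩
    have hB : ∀ (j : ℕ) (z : Vp) (s s' : Vs), s ≠ s' →
        SubAt E w j s z → SubAt E w j s' z → False := by
      intro j z s s' hne h1 h2
      have hj1 : 1 ≤ j := h1.2 ▸ (hd s z h1.1).1
      exact hL ⟨j, Or.inl (mem_L_of_two
        (E := fun p s => E s p) (w := fun p s => w s p)
        (biclique_flip (hb j hj1)) hne h1 h2)⟩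
    rcases hm with ⟨u, p1, p2, hne, h1, h2⟩ | ⟨p, s1, s2, hne, h1, h2⟩
    · have b1 : {s : Vs | E s p1 ∧ ¬ E s p2}.ncard ≤ k - 1 :=
        case2_bound E w k hd p1 p2 u h1 h2
          (fun j s s' hne' ha hb' => hB j p1 s s' hne' ha hb')
      have b2 : {s : Vs | E s p2 ∧ ¬ E s p1}.ncard ≤ k - 1 :=
        case2_bound E w k hd p2 p1 u h2 h1
          (fun j s s' hne' ha hb' => hB j p2 s s' hne' ha hb')
      exact ⟨DTpair (fun p s => E s p) p1 p2, Or.inr ⟨p1, p2, hne, rfl⟩, max_le b1 b2⟩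
    · have b1 : {q : Vp | E s1 q ∧ ¬ E s2 q}.ncard ≤ k - 1 :=
        case2_bound (fun q s => E s q) (fun q s => w s q) k hd' s1 s2 p h1 h2
          (fun j q q' hne' ha hb' => hA j s1 q q' hne' ha hb')
      have b2 : {q : Vp | E s2 q ∧ ¬ E s1 q}.ncard ≤ k - 1 :=
        case2_bound (fun q s => E s q) (fun q s => w s q) k hd' s2 s1 p h2 h1
          (fun j q q' hne' ha hb' => hA j s2 q q' hne' ha hb')
      exact ⟨DTpair E s1 s2, Or.inl ⟨s1, s2, hne, rfl⟩, max_le b1 b2⟩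

lemma hub_set_nonempty {Vs Vp : Type*} [Fintype Vs] [Fintype Vp] (E : Vs → Vp → Prop) :
    {k | ∃ w, IsDecomposition E k w ∧ SatisfiesHUBRule E w}.Nonempty := by
  classical
  set e := Fintype.equivFin (Vs × Vp) with he
  set w : Vs → Vp → ℕ := fun u v => (e (u, v) : ℕ) + 1 with hw
  have hwinj : ∀ a a' b b', w a b = w a' b' → a = a' ∧ b = b' := by
    intro a a' b b' h
    have : e (a, b) = e (a', b') := by
      apply Fin.ext
      simpa [hw] using h
    have := e.injective this
    exact ⟨congrArg Prod.fst this, congrArg Prod.snd this⟩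
  refine ⟨Fintype.card (Vs × Vp), w, ?_, ?_, ?_, ?_⟩
  · intro u v _
    have := (e (u, v)).is_lt
    simp only [hw]
    omega
  · intro j _ s1 s2 p1 p2 h1 h2 h3
    obtain ⟨rfl, -⟩ := hwinj s1 s2 p1 p1 (h1.2.trans h2.2.symm)
    exact h3
  · intro i _ u v huv ⟨p, hp⟩ htw
    have hp' := (htw p).mp hp
    exact absurd (hwinj u v p p (hp.2.trans hp'.2.symm)).1 huv
  · intro i _ u v huv ⟨s, hs⟩ htw
    have hs' := (htw s).mp hs
    exact absurd (hwinj s s u v (hs.2.trans hs'.2.symm)).2 huv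

/-- If a bipartite graph `G` is not a matching (some vertex has degree ≥ 2),
then `DT(G) ≤ hub(G) − 1`. -/
theorem statement14 {Vs Vp : Type*} [Fintype Vs] [Fintype Vp] (E : Vs → Vp → Prop)
    (hm : NotMatching E) :
    distinctness E ≤ hubNumber E - 1 := by
  obtain ⟨w, hd, hh⟩ := Nat.sInf_mem (hub_set_nonempty E)
  obtain ⟨d, hdmem, hdle⟩ := key hm hd hh
  exact le_trans (Nat.sInf_le hdmem) hdle

end Readability
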